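/- arXiv:2306.15810 — 6 statements merged into one kernel-verified Lean document; each statement's English description precedes it below -/
import Mathlib

section
/- Let Φ be an N×N unitary matrix and f ∈ ℂ^N a nonzero vector, and let f̂ = Φ* f. Then ‖f‖₀ · ‖f̂‖₀ ≥ ‖Φ‖_∞^{-2}, where ‖f‖₀ denotes the number of nonzero entries and ‖Φ‖_∞ = max_{i,j} |Φ_{ij}|. -/
open Finset Matrix

/-- supremum-norm uncertainty bound for a unitary matrix. -/
theorem stmt_0 (N : ℕ) (Φ : Matrix (Fin N) (Fin N) ℂ)
    (hΦ : Φ ∈ Matrix.unitaryGroup (Fin N) ℂ)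
    (f : Fin N → ℂ) (hf : f ≠ 0)
    (C : ℝ) (hC : IsGreatest {r : ℝ | ∃ i j, r = ‖Φ i j‖} C)
    (fhat : Fin N → ℂ) (hfhat : fhat = Φᴴ.mulVec f) :
    (1 : ℝ) / C ^ 2 ≤
      ((Finset.univ.filter (fun i => f i ≠ 0)).card *
        (Finset.univ.filter (fun ℓ => fhat ℓ ≠ 0)).card : ℝ) := by
  have hunit : Φ * Φᴴ = 1 := by
    have := Matrix.mem_unitaryGroup_iff.mp hΦ
    simpa [Matrix.star_eq_conjTranspose] using this
  -- pick a nonzero coordinate of f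
  obtain ⟨i0, hi0⟩ : ∃ i, f i ≠ 0 := by
    by_contra h; push_neg at h; exact hf (funext h)
  -- pick a coordinate maximizing ‖f i‖
  obtain ⟨i, -, hi⟩ := Finset.exists_max_image (Finset.univ : Finset (Fin N))
    (fun j => ‖f j‖) ⟨i0, Finset.mem_univ i0⟩
  set M : ℝ := ‖f i‖ with hM
  have hMpos : 0 < M := lt_of_lt_of_le (norm_pos_iff.mpr hi0) (hi i0 (Finset.mem_univ i0))
  -- C bounds all entries and C > 0
  have hCub : ∀ a b, ‖Φ a b‖ ≤ C := fun a b => hC.2 ⟨a, b, rfl⟩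
  have hCpos : 0 < C := by
    have h1 : ((1 : Matrix (Fin N) (Fin N) ℂ)) i i = ∑ k, Φ i k * (Φᴴ) k i := by
      rw [← hunit]; rfl
    have hne : ∃ k, Φ i k ≠ 0 := by
      by_contra h; push_neg at h
      simp [h, Matrix.one_apply] at h1
    obtain ⟨k, hk⟩ := hne
    exact lt_of_lt_of_le (norm_pos_iff.mpr hk) (hCub i k)
  -- reconstruction : f = Φ *ᵥ fhat
  have hrec : Φ.mulVec fhat = f := by
    rw [hfhat, Matrix.mulVec_mulVec, hunit, Matrix.one_mulVec]
  set T := Finset.univ.filter (fun ℓ => fhat ℓ ≠ 0) with hT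
  set S := Finset.univ.filter (fun j => f j ≠ 0) with hS
  -- Step 1 : M ≤ C * ∑_{ℓ ∈ T} ‖fhat ℓ‖
  have step1 : M ≤ C * ∑ ℓ ∈ T, ‖fhat ℓ‖ := by
    have h1 : M = ‖∑ ℓ, Φ i ℓ * fhat ℓ‖ := by
      rw [hM, ← hrec]; rfl
    have h2 : ‖∑ ℓ, Φ i ℓ * fhat ℓ‖ ≤ ∑ ℓ, ‖Φ i ℓ‖ * ‖fhat ℓ‖ := by
      refine (norm_sum_le _ _).trans ?_
      refine Finset.sum_le_sum fun ℓ _ => ?_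
      rw [norm_mul]
    have h3 : ∑ ℓ, ‖Φ i ℓ‖ * ‖fhat ℓ‖ ≤ ∑ ℓ, C * ‖fhat ℓ‖ :=
      Finset.sum_le_sum fun ℓ _ => mul_le_mul_of_nonneg_right (hCub i ℓ) (norm_nonneg _)
    have h4 : ∑ ℓ, C * ‖fhat ℓ‖ = C * ∑ ℓ ∈ T, ‖fhat ℓ‖ := by
      rw [← Finset.mul_sum]
      congr 1
      refine (Finset.sum_subset (Finset.filter_subset _ _) fun x _ hx => ?_).symm
      rw [Finset.mem_filter] at hx
      push_neg at hx
      simp [hx (Finset.mem_univ x)]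
    calc M = ‖∑ ℓ, Φ i ℓ * fhat ℓ‖ := h1
    _ ≤ ∑ ℓ, ‖Φ i ℓ‖ * ‖fhat ℓ‖ := h2
    _ ≤ ∑ ℓ, C * ‖fhat ℓ‖ := h3
    _ = C * ∑ ℓ ∈ T, ‖fhat ℓ‖ := h4
  -- Step 2 : Cauchy-Schwarz
  have step2 : (∑ ℓ ∈ T, ‖fhat ℓ‖) ^ 2 ≤ (T.card : ℝ) * ∑ ℓ ∈ T, ‖fhat ℓ‖ ^ 2 := by
    have := Finset.sum_mul_sq_le_sq_mul_sq T (fun _ => (1 : ℝ)) (fun ℓ => ‖fhat ℓ‖)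
    simpa using this
  -- Parseval : ∑ ‖fhat‖² = ∑ ‖f‖²
  have normsum : ∀ v : Fin N → ℂ, star v ⬝ᵥ v = ((∑ j, ‖v j‖ ^ 2 : ℝ) : ℂ) := by
    intro v
    simp only [dotProduct, Pi.star_apply, Complex.ofReal_sum]
    refine Finset.sum_congr rfl fun j _ => ?_
    rw [mul_comm]
    calc v j * star (v j) = v j * (starRingEnd ℂ) (v j) := rfl
    _ = ((Complex.normSq (v j) : ℝ) : ℂ) := Complex.mul_conj _
    _ = _ := by rw [← Complex.sq_norm]
  have parseval : ∑ ℓ, ‖fhat ℓ‖ ^ 2 = ∑ j, ‖f j‖ ^ 2 := by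
    have hdot : star fhat ⬝ᵥ fhat = star f ⬝ᵥ f := by
      rw [hfhat, Matrix.star_mulVec, Matrix.conjTranspose_conjTranspose,
        ← Matrix.dotProduct_mulVec, Matrix.mulVec_mulVec, hunit, Matrix.one_mulVec]
    have := (normsum fhat).symm.trans (hdot.trans (normsum f))
    exact_mod_cast Complex.ofReal_injective this
  have sumT : ∑ ℓ ∈ T, ‖fhat ℓ‖ ^ 2 = ∑ ℓ, ‖fhat ℓ‖ ^ 2 := by
    refine Finset.sum_subset (Finset.filter_subset _ _) fun x _ hx => ?_
    rw [Finset.mem_filter] at hx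
    push_neg at hx
    simp [hx (Finset.mem_univ x)]
  -- Step 3 : ∑ ‖f‖² ≤ s * M²
  have step3 : ∑ j, ‖f j‖ ^ 2 ≤ (S.card : ℝ) * M ^ 2 := by
    have hsum : ∑ j, ‖f j‖ ^ 2 = ∑ j ∈ S, ‖f j‖ ^ 2 := by
      refine (Finset.sum_subset (Finset.filter_subset _ _) fun x _ hx => ?_).symm
      rw [Finset.mem_filter] at hx
      push_neg at hx
      simp [hx (Finset.mem_univ x)]
    rw [hsum]
    calc ∑ j ∈ S, ‖f j‖ ^ 2 ≤ ∑ _j ∈ S, M ^ 2 :=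
          Finset.sum_le_sum fun j _ => by
            have := hi j (Finset.mem_univ j)
            exact pow_le_pow_left₀ (norm_nonneg _) this 2
    _ = (S.card : ℝ) * M ^ 2 := by rw [Finset.sum_const, nsmul_eq_mul]
  -- Combine
  have key : M ^ 2 ≤ C ^ 2 * ((S.card : ℝ) * (T.card : ℝ)) * M ^ 2 := by
    have hsum_nonneg : 0 ≤ ∑ ℓ ∈ T, ‖fhat ℓ‖ := Finset.sum_nonneg fun _ _ => norm_nonneg _
    calc M ^ 2 ≤ (C * ∑ ℓ ∈ T, ‖fhat ℓ‖) ^ 2 :=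
          pow_le_pow_left₀ hMpos.le step1 2
    _ = C ^ 2 * (∑ ℓ ∈ T, ‖fhat ℓ‖) ^ 2 := by ring
    _ ≤ C ^ 2 * ((T.card : ℝ) * ∑ ℓ ∈ T, ‖fhat ℓ‖ ^ 2) := by
          exact mul_le_mul_of_nonneg_left step2 (sq_nonneg C)
    _ = C ^ 2 * ((T.card : ℝ) * ∑ j, ‖f j‖ ^ 2) := by rw [sumT, parseval]
    _ ≤ C ^ 2 * ((T.card : ℝ) * ((S.card : ℝ) * M ^ 2)) := by
          refine mul_le_mul_of_nonneg_left ?_ (sq_nonneg C)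
          exact mul_le_mul_of_nonneg_left step3 (Nat.cast_nonneg _)
    _ = C ^ 2 * ((S.card : ℝ) * (T.card : ℝ)) * M ^ 2 := by ring
  have hone : 1 ≤ C ^ 2 * ((S.card : ℝ) * (T.card : ℝ)) := by
    have hM2 : 0 < M ^ 2 := pow_pos hMpos 2
    nlinarith
  rw [div_le_iff₀ (pow_pos hCpos 2)]
  calc (1:ℝ) ≤ C ^ 2 * ((S.card : ℝ) * (T.card : ℝ)) := hone
  _ = (S.card : ℝ) * (T.card : ℝ) * C ^ 2 := by ring
end

section
/- Let Φ be an N×N unitary matrix, f ∈ ℂ^N nonzero, and f̂ = Φ* f. Let K = supp(f) and S = supp(f̂). Then the Frobenius norm of the submatrix Φ_{K×S} (rows indexed by K, columns indexed by S) satisfies ‖Φ_{K×S}‖_F ≥ 1 (after normalizing ‖f‖₂ = 1). -/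
open Finset Matrix

/-- Frobenius norm of the support submatrix is at least 1. -/
theorem stmt_1 (N : ℕ) (Φ : Matrix (Fin N) (Fin N) ℂ)
    (hΦ : Φ ∈ Matrix.unitaryGroup (Fin N) ℂ)
    (f : Fin N → ℂ) (hf : f ≠ 0) (hnorm : ∑ i, ‖f i‖ ^ 2 = 1)
    (fhat : Fin N → ℂ) (hfhat : fhat = Φᴴ.mulVec f)
    (K : Finset (Fin N)) (hK : K = Finset.univ.filter (fun i => f i ≠ 0))
    (S : Finset (Fin N)) (hS : S = Finset.univ.filter (fun ℓ => fhat ℓ ≠ 0)) :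
    1 ≤ Real.sqrt (∑ i ∈ K, ∑ ℓ ∈ S, ‖Φ i ℓ‖ ^ 2) := by
  have hΦ1 : Φ * Φᴴ = 1 := by
    have := (Matrix.mem_unitaryGroup_iff).mp hΦ
    exact this
  -- f = Φ fhat
  have hfeq : Φ.mulVec fhat = f := by
    rw [hfhat, Matrix.mulVec_mulVec, hΦ1, Matrix.one_mulVec]
  -- Parseval
  have key : ∀ (v : Fin N → ℂ), (↑(∑ i, ‖v i‖ ^ 2) : ℂ) = dotProduct (star v) v := by
    intro v
    push_cast
    simp [dotProduct, RCLike.conj_mul]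
  have hpar : ∑ ℓ, ‖fhat ℓ‖ ^ 2 = 1 := by
    have h2 : dotProduct (star fhat) fhat = dotProduct (star f) f := by
      conv_lhs => rw [hfhat, Matrix.star_mulVec, Matrix.conjTranspose_conjTranspose,
        Matrix.dotProduct_mulVec, Matrix.vecMul_vecMul, hΦ1, Matrix.vecMul_one]
    have := (key fhat).trans (h2.trans (key f).symm)
    have h3 : (∑ ℓ, ‖fhat ℓ‖ ^ 2) = (∑ i, ‖f i‖ ^ 2) := by
      exact_mod_cast this
    rw [h3, hnorm]
  -- sums restricted to supports
  have hSsum : ∑ ℓ ∈ S, ‖fhat ℓ‖ ^ 2 = 1 := by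
    rw [← hpar]
    apply Finset.sum_subset (by simp [hS])
    intro x _ hx
    have : fhat x = 0 := by
      by_contra h
      exact hx (by simp [hS, h])
    simp [this]
  have hKsum : ∑ i ∈ K, ‖f i‖ ^ 2 = 1 := by
    rw [← hnorm]
    apply Finset.sum_subset (by simp [hK])
    intro x _ hx
    have : f x = 0 := by
      by_contra h
      exact hx (by simp [hK, h])
    simp [this]
  -- f i as a sum over S
  have hfi : ∀ i, f i = ∑ ℓ ∈ S, Φ i ℓ * fhat ℓ := by
    intro i
    have : f i = ∑ ℓ, Φ i ℓ * fhat ℓ := by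
      rw [← hfeq]; rfl
    rw [this]
    symm
    apply Finset.sum_subset (by simp [hS])
    intro x _ hx
    have : fhat x = 0 := by
      by_contra h
      exact hx (by simp [hS, h])
    simp [this]
  -- Cauchy–Schwarz per row
  have hCS : ∀ i, ‖f i‖ ^ 2 ≤ ∑ ℓ ∈ S, ‖Φ i ℓ‖ ^ 2 := by
    intro i
    calc ‖f i‖ ^ 2 = ‖∑ ℓ ∈ S, Φ i ℓ * fhat ℓ‖ ^ 2 := by rw [hfi i]
    _ ≤ (∑ ℓ ∈ S, ‖Φ i ℓ‖ * ‖fhat ℓ‖) ^ 2 := by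
        apply pow_le_pow_left₀ (norm_nonneg _)
        refine (norm_sum_le _ _).trans ?_
        apply le_of_eq
        exact Finset.sum_congr rfl fun ℓ _ => norm_mul _ _
    _ ≤ (∑ ℓ ∈ S, ‖Φ i ℓ‖ ^ 2) * (∑ ℓ ∈ S, ‖fhat ℓ‖ ^ 2) :=
        Finset.sum_mul_sq_le_sq_mul_sq S _ _
    _ = ∑ ℓ ∈ S, ‖Φ i ℓ‖ ^ 2 := by rw [hSsum, mul_one]
  have hmain : 1 ≤ ∑ i ∈ K, ∑ ℓ ∈ S, ‖Φ i ℓ‖ ^ 2 := by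
    rw [← hKsum]
    exact Finset.sum_le_sum fun i _ => hCS i
  calc (1 : ℝ) = Real.sqrt 1 := by simp
  _ ≤ _ := Real.sqrt_le_sqrt hmain
end

section
/- Let Φ be an N×N unitary matrix, f ∈ ℂ^N nonzero, and f̂ = Φ* f. Then ‖f‖₀ · ‖f̂‖₀ ≥ min{ |K|·|S| : K ⊆ {1..N}, S ⊆ {1..N}, ‖Φ_{K×S}‖_F ≥ 1 }. -/
open Finset Matrix

/-- Frobenius-norm global uncertainty bound. -/
theorem stmt_2 (N : ℕ) (Φ : Matrix (Fin N) (Fin N) ℂ)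
    (hΦ : Φ ∈ Matrix.unitaryGroup (Fin N) ℂ)
    (f : Fin N → ℂ) (hf : f ≠ 0)
    (fhat : Fin N → ℂ) (hfhat : fhat = Φᴴ.mulVec f) :
    sInf {m : ℕ | ∃ K S : Finset (Fin N),
        1 ≤ Real.sqrt (∑ i ∈ K, ∑ ℓ ∈ S, ‖Φ i ℓ‖ ^ 2) ∧ m = K.card * S.card} ≤
      (Finset.univ.filter (fun i => f i ≠ 0)).card *
        (Finset.univ.filter (fun ℓ => fhat ℓ ≠ 0)).card := by
  classical
  set K := Finset.univ.filter (fun i => f i ≠ 0) with hKdef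
  set S := Finset.univ.filter (fun ℓ => fhat ℓ ≠ 0) with hSdef
  apply Nat.sInf_le
  refine ⟨K, S, ?_, rfl⟩
  -- reconstruction: f = Φ *ᵥ fhat
  have hΦ1 : Φ * Φᴴ = 1 := Matrix.mem_unitaryGroup_iff.mp hΦ
  have hrec : f = Φ.mulVec fhat := by
    rw [hfhat, Matrix.mulVec_mulVec, hΦ1, Matrix.one_mulVec]
  -- Parseval
  have key : ∀ v : Fin N → ℂ, (star v ⬝ᵥ v).re = ∑ i, ‖v i‖ ^ 2 := by
    intro v
    simp only [dotProduct, Pi.star_apply, Complex.re_sum]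
    refine Finset.sum_congr rfl fun i _ => ?_
    rw [show star (v i) = (starRingEnd ℂ) (v i) from rfl,
      ← Complex.normSq_eq_conj_mul_self]
    simp [← Complex.sq_norm, ← Complex.ofReal_pow]
  have hdot : star fhat ⬝ᵥ fhat = star f ⬝ᵥ f := by
    rw [hfhat, Matrix.star_mulVec, Matrix.conjTranspose_conjTranspose,
      Matrix.dotProduct_mulVec, Matrix.vecMul_vecMul, hΦ1, Matrix.vecMul_one]
  have hpars : ∑ ℓ, ‖fhat ℓ‖ ^ 2 = ∑ i, ‖f i‖ ^ 2 := by
    rw [← key, ← key, hdot]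
  set A := ∑ i, ‖f i‖ ^ 2 with hA
  have hApos : 0 < A := by
    have : ∃ i, f i ≠ 0 := by
      by_contra h
      push_neg at h
      exact hf (funext h)
    obtain ⟨i, hi⟩ := this
    refine Finset.sum_pos' (fun j _ => by positivity) ⟨i, Finset.mem_univ i, pow_pos (norm_pos_iff.mpr hi) 2⟩
  -- restrict sums to supports
  have hfK : ∑ i ∈ K, ‖f i‖ ^ 2 = A := by
    rw [hA]
    refine Finset.sum_subset (Finset.subset_univ K) fun i _ hi => ?_
    simp only [hKdef, Finset.mem_filter, Finset.mem_univ, true_and, not_not] at hi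
    simp [hi]
  have hfS : ∑ ℓ ∈ S, ‖fhat ℓ‖ ^ 2 = A := by
    rw [← hpars]
    refine Finset.sum_subset (Finset.subset_univ S) fun ℓ _ hℓ => ?_
    simp only [hSdef, Finset.mem_filter, Finset.mem_univ, true_and, not_not] at hℓ
    simp [hℓ]
  -- Cauchy-Schwarz at each i : ‖f i‖² ≤ (∑_{ℓ∈S}‖Φ i ℓ‖²) * A
  have hCS : ∀ i, ‖f i‖ ^ 2 ≤ (∑ ℓ ∈ S, ‖Φ i ℓ‖ ^ 2) * A := by
    intro i
    have hfi : f i = ∑ ℓ ∈ S, Φ i ℓ * fhat ℓ := by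
      have : f i = ∑ ℓ, Φ i ℓ * fhat ℓ := by
        rw [hrec]; rfl
      rw [this]
      symm
      refine Finset.sum_subset (Finset.subset_univ S) fun ℓ _ hℓ => ?_
      simp only [hSdef, Finset.mem_filter, Finset.mem_univ, true_and, not_not] at hℓ
      simp [hℓ]
    have h1 : ‖f i‖ ≤ ∑ ℓ ∈ S, ‖Φ i ℓ‖ * ‖fhat ℓ‖ := by
      rw [hfi]
      calc ‖∑ ℓ ∈ S, Φ i ℓ * fhat ℓ‖ ≤ ∑ ℓ ∈ S, ‖Φ i ℓ * fhat ℓ‖ := norm_sum_le _ _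
        _ = ∑ ℓ ∈ S, ‖Φ i ℓ‖ * ‖fhat ℓ‖ := by simp [norm_mul]
    have h2 : (∑ ℓ ∈ S, ‖Φ i ℓ‖ * ‖fhat ℓ‖) ^ 2 ≤
        (∑ ℓ ∈ S, ‖Φ i ℓ‖ ^ 2) * (∑ ℓ ∈ S, ‖fhat ℓ‖ ^ 2) :=
      Finset.sum_mul_sq_le_sq_mul_sq S _ _
    calc ‖f i‖ ^ 2 ≤ (∑ ℓ ∈ S, ‖Φ i ℓ‖ * ‖fhat ℓ‖) ^ 2 := by
          apply pow_le_pow_left₀ (norm_nonneg _) h1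
      _ ≤ (∑ ℓ ∈ S, ‖Φ i ℓ‖ ^ 2) * (∑ ℓ ∈ S, ‖fhat ℓ‖ ^ 2) := h2
      _ = (∑ ℓ ∈ S, ‖Φ i ℓ‖ ^ 2) * A := by rw [hfS]
  have hsum : A ≤ (∑ i ∈ K, ∑ ℓ ∈ S, ‖Φ i ℓ‖ ^ 2) * A := by
    calc A = ∑ i ∈ K, ‖f i‖ ^ 2 := hfK.symm
      _ ≤ ∑ i ∈ K, (∑ ℓ ∈ S, ‖Φ i ℓ‖ ^ 2) * A := Finset.sum_le_sum fun i _ => hCS i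
      _ = (∑ i ∈ K, ∑ ℓ ∈ S, ‖Φ i ℓ‖ ^ 2) * A := by rw [Finset.sum_mul]
  have hC : 1 ≤ ∑ i ∈ K, ∑ ℓ ∈ S, ‖Φ i ℓ‖ ^ 2 :=
    le_of_mul_le_mul_right (by linarith) hApos
  rw [show (1 : ℝ) = Real.sqrt 1 by simp]
  exact Real.sqrt_le_sqrt hC
end

section
/- If all entries of an N×N unitary matrix Φ have absolute value exactly N^{-1/2}, then for every nonzero f ∈ ℂ^N with f̂ = Φ* f, ‖f‖₀ · ‖f̂‖₀ ≥ N. -/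
open Finset Matrix

/-- flat unitary matrices give uncertainty bound N. -/
theorem stmt_5 (N : ℕ) (Φ : Matrix (Fin N) (Fin N) ℂ)
    (hΦ : Φ ∈ Matrix.unitaryGroup (Fin N) ℂ)
    (hflat : ∀ i j, ‖Φ i j‖ = 1 / Real.sqrt N)
    (f : Fin N → ℂ) (hf : f ≠ 0)
    (fhat : Fin N → ℂ) (hfhat : fhat = Φᴴ.mulVec f) :
    N ≤ (Finset.univ.filter (fun i => f i ≠ 0)).card *
        (Finset.univ.filter (fun ℓ => fhat ℓ ≠ 0)).card := by
  classical
  rcases Nat.eq_zero_or_pos N with hN | hN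
  · subst hN; exact absurd (funext fun i => i.elim0) hf
  set A := Finset.univ.filter (fun i => f i ≠ 0) with hA
  set B := Finset.univ.filter (fun ℓ => fhat ℓ ≠ 0) with hB
  set c : ℝ := 1 / Real.sqrt N with hc
  have hNpos : (0:ℝ) < N := by exact_mod_cast hN
  have hc0 : 0 ≤ c := by positivity
  have hcc : c * c = 1 / N := by
    rw [hc, div_mul_div_comm, one_mul, Real.mul_self_sqrt (le_of_lt hNpos)]
  -- inverse relation
  have hrec : f = Φ.mulVec fhat := by
    rw [hfhat, Matrix.mulVec_mulVec, ← Matrix.star_eq_conjTranspose,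
      (Matrix.mem_unitaryGroup_iff.mp hΦ : Φ * star Φ = 1), Matrix.one_mulVec]
  -- max of ‖f‖
  obtain ⟨i₀, hi₀⟩ : ∃ i, ∀ j, ‖f j‖ ≤ ‖f i‖ := by
    obtain ⟨i, -, hi⟩ := Finset.exists_max_image Finset.univ (fun i => ‖f i‖)
      ⟨⟨0, hN⟩, Finset.mem_univ _⟩
    exact ⟨i, fun j => hi j (Finset.mem_univ j)⟩
  set M := ‖f i₀‖ with hM
  have hMpos : 0 < M := by
    obtain ⟨j, hj⟩ : ∃ j, f j ≠ 0 := by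
      by_contra h; push_neg at h; exact hf (funext h)
    exact lt_of_lt_of_le (norm_pos_iff.mpr hj) (hi₀ j)
  -- bound each ‖fhat ℓ‖
  have hfhat_bound : ∀ ℓ, ‖fhat ℓ‖ ≤ c * ((A.card : ℝ) * M) := by
    intro ℓ
    have heq : fhat ℓ = ∑ i, (starRingEnd ℂ) (Φ i ℓ) * f i := by
      rw [hfhat]; simp [Matrix.mulVec, dotProduct, Matrix.conjTranspose_apply]
    rw [heq]
    calc ‖∑ i, (starRingEnd ℂ) (Φ i ℓ) * f i‖
        ≤ ∑ i, ‖(starRingEnd ℂ) (Φ i ℓ) * f i‖ := norm_sum_le _ _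
      _ = ∑ i, c * ‖f i‖ := by
          refine Finset.sum_congr rfl fun i _ => ?_
          rw [norm_mul, RCLike.norm_conj, hflat i ℓ]
      _ = c * ∑ i, ‖f i‖ := by rw [Finset.mul_sum]
      _ = c * ∑ i ∈ A, ‖f i‖ := by
          congr 1
          refine (Finset.sum_subset (Finset.filter_subset _ _) fun i _ hi => ?_).symm
          simp only [hA, Finset.mem_filter, Finset.mem_univ, true_and, not_not] at hi
          simp [hi]
      _ ≤ c * ((A.card : ℝ) * M) := by
          refine mul_le_mul_of_nonneg_left ?_ hc0
          calc ∑ i ∈ A, ‖f i‖ ≤ ∑ _i ∈ A, M := Finset.sum_le_sum fun i _ => hi₀ i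
            _ = (A.card : ℝ) * M := by rw [Finset.sum_const, nsmul_eq_mul]
  -- bound M
  have hmain : M ≤ c * ((B.card : ℝ) * (c * ((A.card : ℝ) * M))) := by
    have heq : f i₀ = ∑ ℓ, Φ i₀ ℓ * fhat ℓ := by
      conv_lhs => rw [hrec]
      simp [Matrix.mulVec, dotProduct]
    calc M = ‖∑ ℓ, Φ i₀ ℓ * fhat ℓ‖ := by rw [hM, heq]
      _ ≤ ∑ ℓ, ‖Φ i₀ ℓ * fhat ℓ‖ := norm_sum_le _ _
      _ = ∑ ℓ, c * ‖fhat ℓ‖ := by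
          refine Finset.sum_congr rfl fun ℓ _ => ?_
          rw [norm_mul, hflat i₀ ℓ]
      _ = c * ∑ ℓ, ‖fhat ℓ‖ := by rw [Finset.mul_sum]
      _ = c * ∑ ℓ ∈ B, ‖fhat ℓ‖ := by
          congr 1
          refine (Finset.sum_subset (Finset.filter_subset _ _) fun ℓ _ hℓ => ?_).symm
          simp only [hB, Finset.mem_filter, Finset.mem_univ, true_and, not_not] at hℓ
          simp [hℓ]
      _ ≤ c * ((B.card : ℝ) * (c * ((A.card : ℝ) * M))) := by
          refine mul_le_mul_of_nonneg_left ?_ hc0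
          calc ∑ ℓ ∈ B, ‖fhat ℓ‖ ≤ ∑ _ℓ ∈ B, c * ((A.card : ℝ) * M) :=
                Finset.sum_le_sum fun ℓ _ => hfhat_bound ℓ
            _ = (B.card : ℝ) * (c * ((A.card : ℝ) * M)) := by
                rw [Finset.sum_const, nsmul_eq_mul]
  -- conclude
  have hfin : (N : ℝ) ≤ (A.card : ℝ) * (B.card : ℝ) := by
    have h1 : c * ((B.card : ℝ) * (c * ((A.card : ℝ) * M)))
        = (c * c) * ((A.card : ℝ) * (B.card : ℝ) * M) := by ring
    rw [h1, hcc] at hmain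
    have h2 : (N : ℝ) * M ≤ (A.card : ℝ) * (B.card : ℝ) * M := by
      have := mul_le_mul_of_nonneg_left hmain (le_of_lt hNpos)
      calc (N : ℝ) * M ≤ (N : ℝ) * (1 / N * ((A.card : ℝ) * (B.card : ℝ) * M)) := this
        _ = (A.card : ℝ) * (B.card : ℝ) * M := by
            rw [← mul_assoc, mul_one_div_cancel (ne_of_gt hNpos), one_mul]
    exact le_of_mul_le_mul_right h2 hMpos
  exact_mod_cast hfin
end

section
/- For N ≥ 2, there exists an N×N real orthogonal matrix Φ whose columns are eigenvectors of the adjacency matrix of the complete graph K_N, and a nonzero vector f, such that ‖f‖₀ · ‖f̂‖₀ = 2 where f̂ = Φᵀ f. -/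
open Finset Matrix

/-- for the complete graph there is an eigenbasis and a signal with
uncertainty product 2. -/
theorem stmt_11 (N : ℕ) (hN : 2 ≤ N) :
    ∃ Φ : Matrix (Fin N) (Fin N) ℝ,
      Φ ∈ Matrix.orthogonalGroup (Fin N) ℝ ∧
      (∀ ℓ : Fin N, ∃ μ : ℝ,
        (Matrix.of fun i j : Fin N => if i = j then (0 : ℝ) else 1).mulVec
            (fun i => Φ i ℓ) = μ • fun i => Φ i ℓ) ∧
      ∃ f : Fin N → ℝ, f ≠ 0 ∧
        (Finset.univ.filter (fun i => f i ≠ 0)).card *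
          (Finset.univ.filter (fun ℓ => Φᵀ.mulVec f ℓ ≠ 0)).card = 2 := by
  obtain ⟨M, rfl⟩ : ∃ M, N = M + 2 := ⟨N - 2, by omega⟩
  set N := M + 2
  have hNR : (0 : ℝ) < (N : ℝ) := by positivity
  have hsN : Real.sqrt N ≠ 0 := by positivity
  have hs2 : Real.sqrt 2 ≠ 0 := by positivity
  have h01 : (0 : Fin N) ≠ 1 := by
    simp [Fin.ext_iff]
  -- the two special vectors
  set u : EuclideanSpace ℝ (Fin N) := WithLp.toLp 2 (fun _ => (Real.sqrt N)⁻¹) with hu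
  set w : EuclideanSpace ℝ (Fin N) :=
    WithLp.toLp 2 (fun i => if i = 0 then (Real.sqrt 2)⁻¹ else if i = 1 then -(Real.sqrt 2)⁻¹ else 0) with hw
  set v : Fin N → EuclideanSpace ℝ (Fin N) := fun k => if k = 0 then u else w with hv
  have huu : (inner ℝ u u : ℝ) = 1 := by
    rw [PiLp.inner_apply]
    simp only [RCLike.inner_apply, starRingEnd_apply, star_trivial, hu]
    rw [Finset.sum_const, Finset.card_univ, Fintype.card_fin]
    rw [← Real.sqrt_inv]
    rw [Real.mul_self_sqrt (by positivity : (0:ℝ) ≤ (N:ℝ)⁻¹)]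
    rw [nsmul_eq_mul]; field_simp
  have hww : (inner ℝ w w : ℝ) = 1 := by
    rw [PiLp.inner_apply]
    simp only [RCLike.inner_apply, starRingEnd_apply, star_trivial]
    rw [Fintype.sum_eq_add (0 : Fin N) 1 h01 (by
      intro x hx
      simp [hw, hx.1, hx.2])]
    have : (Real.sqrt 2)⁻¹ * (Real.sqrt 2)⁻¹ = 2⁻¹ := by
      rw [← Real.sqrt_inv, Real.mul_self_sqrt (by norm_num)]
    simp [hw, h01, this]
    norm_num
  have huw : (inner ℝ u w : ℝ) = 0 := by
    rw [PiLp.inner_apply]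
    simp only [RCLike.inner_apply, starRingEnd_apply, star_trivial]
    rw [Fintype.sum_eq_add (0 : Fin N) 1 h01 (by
      intro x hx
      simp [hw, hu, hx.1, hx.2])]
    simp [hw, hu, h01]
  have hwu : (inner ℝ w u : ℝ) = 0 := by rw [real_inner_comm]; exact huw
  have horth : Orthonormal ℝ (({0, 1} : Set (Fin N)).restrict v) := by
    rw [orthonormal_iff_ite]
    rintro ⟨i, hi⟩ ⟨j, hj⟩
    simp only [Set.restrict, Set.domRestrict_apply, Subtype.mk.injEq]
    rcases hi with rfl | hi
    · rcases hj with rfl | hj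
      · simpa [hv] using huu
      · rcases hj with rfl
        simp [hv, h01, huw]
    · rcases hi with rfl
      rcases hj with rfl | hj
      · simp [hv, h01, hwu]
      · rcases hj with rfl
        simpa [hv, h01] using hww
  obtain ⟨b, hb⟩ := horth.exists_orthonormalBasis_extension_of_card_eq
    (by simp [finrank_euclideanSpace_fin])
  have hb0 : b 0 = u := hb 0 (by simp)
  have hb1 : b 1 = w := hb 1 (by simp)
  have hbo := b.orthonormal
  rw [orthonormal_iff_ite] at hbo
  have hinner : ∀ k l : Fin N, ∑ i, b k i * b l i = if k = l then 1 else 0 := by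
    intro k l
    have := hbo k l
    rw [PiLp.inner_apply] at this
    simpa [RCLike.inner_apply, mul_comm] using this
  refine ⟨Matrix.of fun i ℓ => b ℓ i, ?_, ?_, ?_⟩
  · rw [Matrix.mem_orthogonalGroup_iff']
    ext k l
    simp only [Matrix.mul_apply, Matrix.star_apply, star_trivial, Matrix.of_apply,
      Matrix.transpose_apply, Matrix.conjTranspose_apply]
    rw [hinner k l]
    simp [Matrix.one_apply]
  · intro ℓ
    by_cases hℓ : ℓ = 0
    · subst hℓ
      refine ⟨N - 1, ?_⟩
      funext i
      simp only [Matrix.mulVec, Matrix.of_apply, Pi.smul_apply, smul_eq_mul, dotProduct]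
      rw [hb0]
      simp only [hu]
      have h4 : ∀ j : Fin N, (if i = j then (0:ℝ) else 1) * (Real.sqrt N)⁻¹
          = (Real.sqrt N)⁻¹ - (if i = j then (Real.sqrt N)⁻¹ else 0) := by
        intro j; by_cases h : i = j <;> simp [h]
      rw [Finset.sum_congr rfl (fun j _ => h4 j), Finset.sum_sub_distrib,
        Finset.sum_ite_eq (Finset.univ : Finset (Fin N)) i, Finset.sum_const,
        Finset.card_univ, Fintype.card_fin]
      simp [nsmul_eq_mul]
      ring
    · refine ⟨-1, ?_⟩
      have hsum : ∑ j, b ℓ j = 0 := by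
        have := hinner 0 ℓ
        rw [hb0] at this
        simp only [hu, if_neg (Ne.symm hℓ)] at this
        rw [← Finset.mul_sum] at this
        rcases mul_eq_zero.mp this with h | h
        · exact absurd h (by positivity)
        · exact h
      funext i
      simp only [Matrix.mulVec, Matrix.of_apply, Pi.smul_apply, smul_eq_mul, dotProduct]
      have : ∀ j, (if i = j then (0:ℝ) else 1) * b ℓ j
          = b ℓ j - (if i = j then b ℓ j else 0) := by
        intro j
        by_cases h : i = j <;> simp [h]
      rw [Finset.sum_congr rfl (fun j _ => this j), Finset.sum_sub_distrib,
        Finset.sum_ite_eq (Finset.univ : Finset (Fin N)) i, hsum]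
      simp
  · refine ⟨fun i => if i = 0 then 1 else if i = 1 then -1 else 0, ?_, ?_⟩
    · intro hf
      have := congrFun hf 0
      simp at this
    · have hfilter1 : (Finset.univ.filter
          (fun i : Fin N => (if i = 0 then (1:ℝ) else if i = 1 then -1 else 0) ≠ 0))
          = {0, 1} := by
        ext i
        by_cases h0 : i = 0 <;> by_cases h1 : i = 1 <;>
          simp [h0, h1, Finset.mem_insert]
      have key : ∀ ℓ : Fin N, (Matrix.of fun i ℓ => b ℓ i)ᵀ.mulVec
          (fun i => if i = 0 then (1:ℝ) else if i = 1 then -1 else 0) ℓ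
          = Real.sqrt 2 * (if ℓ = 1 then 1 else 0) := by
        intro ℓ
        simp only [Matrix.mulVec, Matrix.transpose_apply, Matrix.of_apply, dotProduct]
        rw [Fintype.sum_eq_add (0 : Fin N) 1 h01 (by
          intro x hx
          simp [hx.1, hx.2])]
        have := hinner ℓ 1
        rw [hb1] at this
        have hsum2 : ∑ i : Fin N, b ℓ i * w i = b ℓ 0 * w 0 + b ℓ 1 * w 1 :=
          Fintype.sum_eq_add (0 : Fin N) 1 h01 (fun x hx => by
            simp [hw, hx.1, hx.2])
        rw [hsum2] at this
        simp only [hw, if_pos rfl, if_neg h01.symm, if_neg h01, eq_self_iff_true, if_true] at this ⊢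
        have h2 : b ℓ 0 - b ℓ 1 = Real.sqrt 2 * (if ℓ = 1 then 1 else 0) := by
          have h3 : (b ℓ 0 - b ℓ 1) * (Real.sqrt 2)⁻¹ = if ℓ = 1 then 1 else 0 := by
            rw [← this]; ring
          field_simp at h3
          rw [h3]
        rw [← h2]; ring
      have hfilter2 : (Finset.univ.filter
          (fun ℓ : Fin N => (Matrix.of fun i ℓ => b ℓ i)ᵀ.mulVec
            (fun i => if i = 0 then (1:ℝ) else if i = 1 then -1 else 0) ℓ ≠ 0))
          = {1} := by
        ext ℓ
        rw [Finset.mem_filter, Finset.mem_singleton]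
        rw [key ℓ]
        by_cases h : ℓ = 1 <;> simp [h, hs2]
      rw [hfilter1, hfilter2]
      simp [h01]
end

section
/- Let Φ be a real N×N orthogonal matrix and define for a nonzero signal f the quantity U(f) = ‖f‖₀ · ‖Φᵀ f‖₀. Then min over nonzero f of U(f) ≥ min{|K||S| : ‖Φ_{K×S}‖_F ≥ 1}, and moreover this Frobenius quantity can be strictly larger than ‖Φ‖_∞^{-2}: for Φ = [[a, b],[−b, a]] with a² + b² = 1 and 1/2 < a² < 1, one has ‖Φ‖_∞^{-2} = 1/a² < 2 while min{|K||S| : ‖Φ_{K×S}‖_F ≥ 1} = 2. -/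
open Finset Matrix

/-- the Frobenius quantity lower-bounds the uncertainty product for
real orthogonal matrices, and a 2×2 rotation example shows it can strictly beat the
supremum bound. -/
theorem stmt_19 (N : ℕ) (Φ : Matrix (Fin N) (Fin N) ℝ)
    (hΦ : Φ ∈ Matrix.orthogonalGroup (Fin N) ℝ) :
    (∀ f : Fin N → ℝ, f ≠ 0 →
      sInf {m : ℕ | ∃ K S : Finset (Fin N),
          1 ≤ Real.sqrt (∑ i ∈ K, ∑ ℓ ∈ S, |Φ i ℓ| ^ 2) ∧ m = K.card * S.card} ≤
        (Finset.univ.filter (fun i => f i ≠ 0)).card *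
          (Finset.univ.filter (fun ℓ => Φᵀ.mulVec f ℓ ≠ 0)).card) ∧
    (∀ a b : ℝ, a ^ 2 + b ^ 2 = 1 → 1 / 2 < a ^ 2 → a ^ 2 < 1 →
      (1 / a ^ 2 < 2) ∧
      sInf {m : ℕ | ∃ K S : Finset (Fin 2),
          1 ≤ Real.sqrt (∑ i ∈ K, ∑ ℓ ∈ S, |(!![a, b; -b, a]) i ℓ| ^ 2) ∧
          m = K.card * S.card} = 2) := by
  constructor
  · intro f hf
    set g : Fin N → ℝ := Φᵀ.mulVec f with hg
    set K : Finset (Fin N) := Finset.univ.filter (fun i => f i ≠ 0) with hK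
    set S : Finset (Fin N) := Finset.univ.filter (fun ℓ => g ℓ ≠ 0) with hS
    -- orthogonality: Φ * Φᵀ = 1
    have horth : Φ * Φᵀ = 1 := by
      have := (Matrix.mem_orthogonalGroup_iff (Fin N) ℝ).mp hΦ
      simpa [Matrix.star_eq_conjTranspose, Matrix.conjTranspose] using this
    -- norm preservation
    have hnorm : ∑ ℓ, g ℓ ^ 2 = ∑ i, f i ^ 2 := by
      have h1 : ∑ ℓ, g ℓ ^ 2 = f ⬝ᵥ Φ.mulVec g := by
        rw [Matrix.dotProduct_mulVec, ← Matrix.mulVec_transpose, ← hg]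
        simp [dotProduct, sq]
      rw [h1, hg, Matrix.mulVec_mulVec, horth, Matrix.one_mulVec]
      simp [dotProduct, sq]
    have hfK : ∑ i ∈ K, f i ^ 2 = ∑ i, f i ^ 2 := by
      apply Finset.sum_subset (Finset.subset_univ K)
      intro i _ hi
      simp only [hK, Finset.mem_filter, Finset.mem_univ, true_and, not_not] at hi
      simp [hi]
    have hgS : ∑ ℓ ∈ S, g ℓ ^ 2 = ∑ ℓ, g ℓ ^ 2 := by
      apply Finset.sum_subset (Finset.subset_univ S)
      intro ℓ _ hℓ
      simp only [hS, Finset.mem_filter, Finset.mem_univ, true_and, not_not] at hℓ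
      simp [hℓ]
    have hfpos : 0 < ∑ i, f i ^ 2 := by
      rcases Function.ne_iff.mp hf with ⟨i, hi⟩
      have hi' : f i ≠ 0 := by simpa using hi
      have : (0:ℝ) < f i ^ 2 :=
        lt_of_le_of_ne (sq_nonneg _) (Ne.symm (pow_ne_zero 2 hi'))
      exact lt_of_lt_of_le this (Finset.single_le_sum (fun j _ => sq_nonneg (f j))
        (Finset.mem_univ i))
    -- Cauchy-Schwarz
    have hCS : ∑ ℓ ∈ S, g ℓ ^ 2 ≤
        (∑ i ∈ K, ∑ ℓ ∈ S, |Φ i ℓ| ^ 2) * ∑ i ∈ K, f i ^ 2 := by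
      have hterm : ∀ ℓ, g ℓ ^ 2 ≤ (∑ i ∈ K, (Φ i ℓ) ^ 2) * ∑ i ∈ K, f i ^ 2 := by
        intro ℓ
        have hgl : g ℓ = ∑ i ∈ K, Φ i ℓ * f i := by
          rw [hg]
          have : Φᵀ.mulVec f ℓ = ∑ i, Φ i ℓ * f i := by
            simp [Matrix.mulVec, dotProduct, Matrix.transpose_apply]
          rw [this]
          symm
          apply Finset.sum_subset (Finset.subset_univ K)
          intro i _ hi
          simp only [hK, Finset.mem_filter, Finset.mem_univ, true_and, not_not] at hi
          simp [hi]
        rw [hgl]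
        exact Finset.sum_mul_sq_le_sq_mul_sq K (fun i => Φ i ℓ) f
      calc ∑ ℓ ∈ S, g ℓ ^ 2 ≤ ∑ ℓ ∈ S, (∑ i ∈ K, (Φ i ℓ) ^ 2) * ∑ i ∈ K, f i ^ 2 :=
            Finset.sum_le_sum (fun ℓ _ => hterm ℓ)
        _ = (∑ i ∈ K, ∑ ℓ ∈ S, |Φ i ℓ| ^ 2) * ∑ i ∈ K, f i ^ 2 := by
            rw [← Finset.sum_mul, Finset.sum_comm]
            simp [sq_abs]
    have hT1 : (1:ℝ) ≤ ∑ i ∈ K, ∑ ℓ ∈ S, |Φ i ℓ| ^ 2 := by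
      have h2 : ∑ i, f i ^ 2 ≤ (∑ i ∈ K, ∑ ℓ ∈ S, |Φ i ℓ| ^ 2) * ∑ i, f i ^ 2 := by
        calc ∑ i, f i ^ 2 = ∑ ℓ ∈ S, g ℓ ^ 2 := by rw [hgS, hnorm]
          _ ≤ (∑ i ∈ K, ∑ ℓ ∈ S, |Φ i ℓ| ^ 2) * ∑ i ∈ K, f i ^ 2 := hCS
          _ = (∑ i ∈ K, ∑ ℓ ∈ S, |Φ i ℓ| ^ 2) * ∑ i, f i ^ 2 := by rw [hfK]
      exact le_of_mul_le_mul_right (by linarith) hfpos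
    exact Nat.sInf_le ⟨K, S, Real.one_le_sqrt.mpr hT1, rfl⟩
  · intro a b hab ha2 ha1
    have hb2 : b ^ 2 = 1 - a ^ 2 := by linarith
    have ha0 : (0:ℝ) < a ^ 2 := by linarith
    refine ⟨by rw [div_lt_iff₀ ha0]; linarith, ?_⟩
    have hmem : 2 ∈ {m : ℕ | ∃ K S : Finset (Fin 2),
        1 ≤ Real.sqrt (∑ i ∈ K, ∑ ℓ ∈ S, |(!![a, b; -b, a]) i ℓ| ^ 2) ∧
        m = K.card * S.card} := by
      refine ⟨{0}, Finset.univ, ?_, by simp⟩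
      rw [Real.one_le_sqrt]
      have : ∑ i ∈ ({0} : Finset (Fin 2)), ∑ ℓ : Fin 2, |(!![a, b; -b, a]) i ℓ| ^ 2
          = a ^ 2 + b ^ 2 := by
        simp [Fin.sum_univ_two, sq_abs]
      rw [this, hab]
    refine le_antisymm (Nat.sInf_le hmem) (le_csInf ⟨2, hmem⟩ ?_)
    rintro m ⟨K, S, hsqrt, rfl⟩
    by_contra hlt
    push_neg at hlt
    interval_cases h : K.card * S.card
    · -- card product 0: one of them empty
      have : K = ∅ ∨ S = ∅ := by
        rcases Nat.mul_eq_zero.mp h with h' | h'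
        · exact Or.inl (Finset.card_eq_zero.mp h')
        · exact Or.inr (Finset.card_eq_zero.mp h')
      have hz : (∑ i ∈ K, ∑ ℓ ∈ S, |(!![a, b; -b, a]) i ℓ| ^ 2) = 0 := by
        rcases this with h' | h' <;> simp [h']
      rw [hz, Real.sqrt_zero] at hsqrt
      linarith
    · -- card product 1: both singletons
      have hK1 : K.card = 1 := Nat.eq_one_of_mul_eq_one_right h
      have hS1 : S.card = 1 := Nat.eq_one_of_mul_eq_one_left h
      obtain ⟨i, hKi⟩ := Finset.card_eq_one.mp hK1
      obtain ⟨ℓ, hSℓ⟩ := Finset.card_eq_one.mp hS1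
      subst hKi hSℓ
      rw [Real.one_le_sqrt] at hsqrt
      simp only [Finset.sum_singleton, sq_abs] at hsqrt
      fin_cases i <;> fin_cases ℓ <;> simp at hsqrt <;> nlinarith [sq_abs a, sq_abs b, hsqrt]
end
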